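/- Let G and G' be simple graphs on the same finite vertex set such that for every vertex v, the multiset of degrees in G of the neighbors of v in G equals the multiset of degrees in G' of the neighbors of v in G' (i.e., G and G' are realizations of the same neighborhood degree list). Then there exists a finite sequence of N-switches which, when applied to G, results in the graph G'. -/

import Mathlib

/-- The degree of a vertex: the number of its neighbors. -/
noncomputable def deg {V : Type*} (G : SimpleGraph V) (v : V) : ℕ :=
  (G.neighborSet v).ncard

/-- The neighborhood degree list of a vertex `v`: the multiset of the degrees
(in `G`) of the neighbors of `v`. -/
noncomputable def NDL {V : Type*} [Fintype V] (G : SimpleGraph V) (v : V) : Multiset ℕ :=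
  ((G.neighborSet v).toFinite.toFinset).val.map (deg G)

/-- The graph resulting from deleting the edges `ac` and `bd` of `G` and adding
the edges `ad` and `bc`. -/
def switchedGraph {V : Type*} (G : SimpleGraph V) (a b c d : V) : SimpleGraph V :=
  (G.deleteEdges {s(a, c), s(b, d)}) ⊔ SimpleGraph.fromEdgeSet {s(a, d), s(b, c)}

/-- `H` is obtained from `G` by a 2-switch on the alternating 4-cycle `a, b, c, d`. -/
def IsTwoSwitch {V : Type*} (G H : SimpleGraph V) (a b c d : V) : Prop :=
  a ≠ b ∧ a ≠ c ∧ a ≠ d ∧ b ≠ c ∧ b ≠ d ∧ c ≠ d ∧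
  G.Adj a c ∧ G.Adj b d ∧ ¬ G.Adj a d ∧ ¬ G.Adj b c ∧
  H = switchedGraph G a b c d

/-- `H` is obtained from `G` by performing some N-switch: a 2-switch in which
additionally `deg a = deg b` and `deg c = deg d`. -/
def NSwitch {V : Type*} (G H : SimpleGraph V) : Prop :=
  ∃ a b c d : V, IsTwoSwitch G H a b c d ∧ deg G a = deg G b ∧ deg G c = deg G d

namespace NDLwork

variable {V : Type*}

lemma switchedGraph_adjS (G : SimpleGraph V) (a b c d x y : V) :
    (switchedGraph G a b c d).Adj x y ↔
      (G.Adj x y ∧ s(x,y) ≠ s(a,c) ∧ s(x,y) ≠ s(b,d)) ∨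
      ((s(x,y) = s(a,d) ∨ s(x,y) = s(b,c)) ∧ x ≠ y) := by
  simp [switchedGraph, SimpleGraph.deleteEdges_adj, SimpleGraph.fromEdgeSet_adj,
    Set.mem_insert_iff, Set.mem_singleton_iff]

lemma switchedGraph_adj (G : SimpleGraph V) (a b c d x y : V) :
    (switchedGraph G a b c d).Adj x y ↔
      (G.Adj x y ∧ ¬(x = a ∧ y = c) ∧ ¬(x = c ∧ y = a) ∧ ¬(x = b ∧ y = d) ∧ ¬(x = d ∧ y = b)) ∨
      (((x = a ∧ y = d) ∨ (x = d ∧ y = a) ∨ (x = b ∧ y = c) ∨ (x = c ∧ y = b)) ∧ x ≠ y) := by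
  rw [switchedGraph_adjS]
  simp only [ne_eq, Sym2.eq_iff, not_or, or_assoc, and_assoc]

lemma switchedGraph_comm1 (G : SimpleGraph V) (a b c d : V) :
    switchedGraph G a b c d = switchedGraph G b a d c := by
  rw [switchedGraph, switchedGraph, Set.pair_comm (s(a,c)) (s(b,d)), Set.pair_comm (s(a,d)) (s(b,c))]

lemma switchedGraph_comm2 (G : SimpleGraph V) (a b c d : V) :
    switchedGraph G a b c d = switchedGraph G c d a b := by
  rw [switchedGraph, switchedGraph]
  rw [show s(c,a) = s(a,c) from Sym2.eq_swap, show s(d,b) = s(b,d) from Sym2.eq_swap,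
    show s(c,b) = s(b,c) from Sym2.eq_swap, show s(d,a) = s(a,d) from Sym2.eq_swap,
    Set.pair_comm (s(b,c)) (s(a,d))]

variable {G : SimpleGraph V} {a b c d : V}

lemma ns_other (hab : a ≠ b) (hac : a ≠ c) (had : a ≠ d) (hbc : b ≠ c) (hbd : b ≠ d)
    (hcd : c ≠ d) (x : V) (h1 : x ≠ a) (h2 : x ≠ b) (h3 : x ≠ c) (h4 : x ≠ d) :
    (switchedGraph G a b c d).neighborSet x = G.neighborSet x := by
  ext u
  simp only [SimpleGraph.mem_neighborSet, switchedGraph_adj]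
  constructor
  · rintro (⟨h, _⟩ | ⟨h, hne⟩)
    · exact h
    · exfalso
      rcases h with ⟨rfl, rfl⟩ | ⟨rfl, rfl⟩ | ⟨rfl, rfl⟩ | ⟨rfl, rfl⟩ <;> tauto
  · intro hadj
    left
    refine ⟨hadj, ?_, ?_, ?_, ?_⟩ <;> rintro ⟨rfl, rfl⟩ <;> tauto

lemma ns_a (hab : a ≠ b) (hac : a ≠ c) (had : a ≠ d) (hbc : b ≠ c) (hbd : b ≠ d)
    (hcd : c ≠ d) (Gac : G.Adj a c) (nGad : ¬ G.Adj a d) :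
    (switchedGraph G a b c d).neighborSet a = insert d (G.neighborSet a \ {c}) := by
  ext u
  simp only [SimpleGraph.mem_neighborSet, switchedGraph_adj, Set.mem_insert_iff,
    Set.mem_diff, Set.mem_singleton_iff]
  constructor
  · rintro (⟨h, h1, h2, h3, h4⟩ | ⟨h, hne⟩)
    · right
      exact ⟨h, fun hu => h1 ⟨trivial, hu⟩⟩
    · rcases h with ⟨-, rfl⟩ | ⟨rfl, rfl⟩ | ⟨rfl, rfl⟩ | ⟨rfl, rfl⟩
      · left; rfl
      · exact absurd rfl had
      · exact absurd rfl hab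
      · exact absurd rfl hac
  · rintro (rfl | ⟨hadj, huc⟩)
    · exact Or.inr ⟨Or.inl ⟨trivial, rfl⟩, had⟩
    · left
      have hua : u ≠ a := fun huu => G.irrefl (huu ▸ hadj)
      refine ⟨hadj, ?_, ?_, ?_, ?_⟩ <;> simp_all

lemma ns_b (hab : a ≠ b) (hac : a ≠ c) (had : a ≠ d) (hbc : b ≠ c) (hbd : b ≠ d)
    (hcd : c ≠ d) (Gbd : G.Adj b d) (nGbc : ¬ G.Adj b c) :
    (switchedGraph G a b c d).neighborSet b = insert c (G.neighborSet b \ {d}) := by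
  rw [switchedGraph_comm1]
  exact ns_a hab.symm hbd hbc had hac hcd.symm Gbd nGbc

lemma ns_c (hab : a ≠ b) (hac : a ≠ c) (had : a ≠ d) (hbc : b ≠ c) (hbd : b ≠ d)
    (hcd : c ≠ d) (Gac : G.Adj a c) (nGbc : ¬ G.Adj b c) :
    (switchedGraph G a b c d).neighborSet c = insert b (G.neighborSet c \ {a}) := by
  rw [switchedGraph_comm2]
  exact ns_a hcd hac.symm hbc.symm had.symm hbd.symm hab Gac.symm (fun hh => nGbc hh.symm)

lemma ns_d (hab : a ≠ b) (hac : a ≠ c) (had : a ≠ d) (hbc : b ≠ c) (hbd : b ≠ d)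
    (hcd : c ≠ d) (Gbd : G.Adj b d) (nGad : ¬ G.Adj a d) :
    (switchedGraph G a b c d).neighborSet d = insert a (G.neighborSet d \ {b}) := by
  rw [switchedGraph_comm1, switchedGraph_comm2]
  exact ns_a hcd.symm hbd.symm had.symm hbc.symm hac.symm hab.symm Gbd.symm
    (fun hh => nGad hh.symm)

end NDLwork

namespace NDLwork2
open NDLwork

variable {V : Type*}

lemma count_map_toFinset [Fintype V] (S : Set V) (f : V → ℕ) (k : ℕ) :
    ((S.toFinite.toFinset).val.map f).count k = {u | u ∈ S ∧ f u = k}.ncard := by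
  classical
  rw [Multiset.count_map]
  have h1 : {u | u ∈ S ∧ f u = k} = ↑(S.toFinite.toFinset.filter (fun u => k = f u)) := by
    ext u; simp [Set.Finite.mem_toFinset, eq_comm, Set.mem_setOf_eq]
  rw [h1, Set.ncard_coe_finset]
  rfl

lemma count_NDL [Fintype V] (G : SimpleGraph V) (v : V) (k : ℕ) :
    (NDL G v).count k = {u | u ∈ G.neighborSet v ∧ deg G u = k}.ncard :=
  count_map_toFinset (G.neighborSet v) (deg G) k

lemma card_NDL [Fintype V] (G : SimpleGraph V) (v : V) : Multiset.card (NDL G v) = deg G v := by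
  rw [NDL, Multiset.card_map, deg, Set.ncard_eq_toFinset_card _ (G.neighborSet v).toFinite]
  rfl

lemma ncard_insert_diff [Fintype V] {N : Set V} {x y : V} (hx : x ∈ N) (hy : y ∉ N) :
    (insert y (N \ {x})).ncard = N.ncard := by
  rw [Set.ncard_insert_of_notMem (fun hmem => hy hmem.1) (Set.toFinite _),
    Set.ncard_diff_singleton_of_mem hx]
  have hpos : 0 < N.ncard := (Set.ncard_pos (Set.toFinite _)).2 ⟨x, hx⟩
  omega

lemma count_update [Fintype V] {N : Set V} {f : V → ℕ} {x y : V}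
    (hx : x ∈ N) (hy : y ∉ N) (hxy : f x = f y) (k : ℕ) :
    {u | u ∈ insert y (N \ {x}) ∧ f u = k}.ncard = {u | u ∈ N ∧ f u = k}.ncard := by
  by_cases hk : f y = k
  · have hset : {u | u ∈ insert y (N \ {x}) ∧ f u = k}
        = insert y ({u | u ∈ N ∧ f u = k} \ {x}) := by
      ext u
      by_cases hu : u = y
      · subst hu
        simp [hk, hy, Set.mem_insert_iff]
      · simp only [Set.mem_setOf_eq, Set.mem_insert_iff, Set.mem_diff, Set.mem_singleton_iff, hu,
          false_or]
        tauto
    rw [hset]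
    exact ncard_insert_diff ⟨hx, by rw [hxy, hk]⟩ (fun hmem => hy hmem.1)
  · have hset : {u | u ∈ insert y (N \ {x}) ∧ f u = k} = {u | u ∈ N ∧ f u = k} := by
      ext u
      by_cases hu : u = y
      · subst hu; simp [hk, hy]
      · by_cases hux : u = x
        · subst hux
          have : ¬ f u = k := by rw [hxy]; exact hk
          simp [this]
        · simp only [Set.mem_setOf_eq, Set.mem_insert_iff, Set.mem_diff, Set.mem_singleton_iff,
            hu, hux, false_or]
          tauto
    rw [hset]

variable {G : SimpleGraph V} {a b c d : V}

lemma deg_switched [Fintype V] (hab : a ≠ b) (hac : a ≠ c) (had : a ≠ d) (hbc : b ≠ c)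
    (hbd : b ≠ d) (hcd : c ≠ d) (Gac : G.Adj a c) (Gbd : G.Adj b d)
    (nGad : ¬ G.Adj a d) (nGbc : ¬ G.Adj b c) :
    deg (switchedGraph G a b c d) = deg G := by
  funext v
  have mca : c ∈ G.neighborSet a := Gac
  have mda : d ∉ G.neighborSet a := nGad
  have mdb : d ∈ G.neighborSet b := Gbd
  have mcb : c ∉ G.neighborSet b := nGbc
  have mac : a ∈ G.neighborSet c := Gac.symm
  have mbc : b ∉ G.neighborSet c := fun hh => nGbc (((G.mem_neighborSet c b).1 hh).symm)
  have mbd : b ∈ G.neighborSet d := Gbd.symm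
  have mad : a ∉ G.neighborSet d := fun hh => nGad (((G.mem_neighborSet d a).1 hh).symm)
  by_cases h1 : v = a
  · subst h1
    rw [deg, ns_a hab hac had hbc hbd hcd Gac nGad, deg]
    exact ncard_insert_diff mca mda
  · by_cases h2 : v = b
    · subst h2
      rw [deg, ns_b hab hac had hbc hbd hcd Gbd nGbc, deg]
      exact ncard_insert_diff mdb mcb
    · by_cases h3 : v = c
      · subst h3
        rw [deg, ns_c hab hac had hbc hbd hcd Gac nGbc, deg]
        exact ncard_insert_diff mac mbc
      · by_cases h4 : v = d
        · subst h4
          rw [deg, ns_d hab hac had hbc hbd hcd Gbd nGad, deg]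
          exact ncard_insert_diff mbd mad
        · rw [deg, ns_other hab hac had hbc hbd hcd v h1 h2 h3 h4, deg]

lemma NDL_switched [Fintype V] (hab : a ≠ b) (hac : a ≠ c) (had : a ≠ d) (hbc : b ≠ c)
    (hbd : b ≠ d) (hcd : c ≠ d) (Gac : G.Adj a c) (Gbd : G.Adj b d)
    (nGad : ¬ G.Adj a d) (nGbc : ¬ G.Adj b c)
    (hdab : deg G a = deg G b) (hdcd : deg G c = deg G d) :
    ∀ v, NDL (switchedGraph G a b c d) v = NDL G v := by
  intro v
  have hdeg := deg_switched hab hac had hbc hbd hcd Gac Gbd nGad nGbc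
  rw [Multiset.ext]
  intro k
  rw [count_NDL, count_NDL, hdeg]
  have mca : c ∈ G.neighborSet a := Gac
  have mda : d ∉ G.neighborSet a := nGad
  have mdb : d ∈ G.neighborSet b := Gbd
  have mcb : c ∉ G.neighborSet b := nGbc
  have mac : a ∈ G.neighborSet c := Gac.symm
  have mbc : b ∉ G.neighborSet c := fun hh => nGbc (((G.mem_neighborSet c b).1 hh).symm)
  have mbd : b ∈ G.neighborSet d := Gbd.symm
  have mad : a ∉ G.neighborSet d := fun hh => nGad (((G.mem_neighborSet d a).1 hh).symm)
  by_cases h1 : v = a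
  · subst h1
    rw [ns_a hab hac had hbc hbd hcd Gac nGad]
    exact count_update mca mda hdcd k
  · by_cases h2 : v = b
    · subst h2
      rw [ns_b hab hac had hbc hbd hcd Gbd nGbc]
      exact count_update mdb mcb hdcd.symm k
    · by_cases h3 : v = c
      · subst h3
        rw [ns_c hab hac had hbc hbd hcd Gac nGbc]
        exact count_update mac mbc hdab k
      · by_cases h4 : v = d
        · subst h4
          rw [ns_d hab hac had hbc hbd hcd Gbd nGad]
          exact count_update mbd mad hdab.symm k
        · rw [ns_other hab hac had hbc hbd hcd v h1 h2 h3 h4]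

lemma NSwitch_deg [Fintype V] {G H : SimpleGraph V} (hsw : NSwitch G H) : deg H = deg G := by
  obtain ⟨a, b, c, d, ⟨hab, hac, had, hbc, hbd, hcd, Gac, Gbd, nGad, nGbc, rfl⟩, -, -⟩ := hsw
  exact deg_switched hab hac had hbc hbd hcd Gac Gbd nGad nGbc

lemma NSwitch_NDL [Fintype V] {G H : SimpleGraph V} (hsw : NSwitch G H) :
    ∀ v, NDL H v = NDL G v := by
  obtain ⟨a, b, c, d, ⟨hab, hac, had, hbc, hbd, hcd, Gac, Gbd, nGad, nGbc, rfl⟩, hdab, hdcd⟩ := hsw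
  exact NDL_switched hab hac had hbc hbd hcd Gac Gbd nGad nGbc hdab hdcd

end NDLwork2

namespace NDLwork3
open NDLwork NDLwork2

variable {V : Type*}

lemma set_restore {α : Type*} {E : Set α} {e1 e2 e3 e4 : α}
    (h1 : e1 ∈ E) (h2 : e2 ∈ E) (h3 : e3 ∉ E) (h4 : e4 ∉ E)
    (d13 : e1 ≠ e3) (d14 : e1 ≠ e4) (d23 : e2 ≠ e3) (d24 : e2 ≠ e4) :
    (((E \ {e1, e2}) ∪ {e3, e4}) \ {e3, e4}) ∪ {e1, e2} = E := by
  ext e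
  simp only [Set.mem_union, Set.mem_diff, Set.mem_insert_iff, Set.mem_singleton_iff]
  constructor
  · rintro (⟨(⟨heE, -⟩ | h34), hn34⟩ | (rfl | rfl))
    · exact heE
    · exact absurd h34 hn34
    · exact h1
    · exact h2
  · intro heE
    by_cases he1 : e = e1
    · exact Or.inr (Or.inl he1)
    · by_cases he2 : e = e2
      · exact Or.inr (Or.inr he2)
      · refine Or.inl ⟨Or.inl ⟨heE, ?_⟩, ?_⟩
        · rintro (rfl | rfl) <;> tauto
        · rintro (rfl | rfl) <;> tauto

variable {G : SimpleGraph V} {a b c d : V}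

lemma switched_edgeSet (had : a ≠ d) (hbc : b ≠ c) :
    (switchedGraph G a b c d).edgeSet
      = (G.edgeSet \ {s(a,c), s(b,d)}) ∪ ({s(a,d), s(b,c)} : Set (Sym2 V)) := by
  rw [switchedGraph, SimpleGraph.edgeSet_sup, SimpleGraph.edgeSet_deleteEdges,
    SimpleGraph.edgeSet_fromEdgeSet]
  congr 1
  ext e
  simp only [Set.mem_diff, Set.mem_insert_iff, Set.mem_singleton_iff, Set.mem_setOf_eq]
  constructor
  · rintro ⟨h, -⟩; exact h
  · rintro (rfl | rfl)
    · exact ⟨Or.inl rfl, by simp [Sym2.mk_isDiag_iff, had]⟩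
    · exact ⟨Or.inr rfl, by simp [Sym2.mk_isDiag_iff, hbc]⟩

lemma NSwitch_symm [Fintype V] {G H : SimpleGraph V} (hsw : NSwitch G H) : NSwitch H G := by
  obtain ⟨a, b, c, d, ⟨hab, hac, had, hbc, hbd, hcd, Gac, Gbd, nGad, nGbc, rfl⟩, hdab, hdcd⟩ := hsw
  have hdeg : deg (switchedGraph G a b c d) = deg G :=
    deg_switched hab hac had hbc hbd hcd Gac Gbd nGad nGbc
  have Had : (switchedGraph G a b c d).Adj a d :=
    (switchedGraph_adj G a b c d a d).2 (Or.inr ⟨Or.inl ⟨rfl, rfl⟩, had⟩)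
  have Hbc : (switchedGraph G a b c d).Adj b c :=
    (switchedGraph_adj G a b c d b c).2 (Or.inr ⟨Or.inr (Or.inr (Or.inl ⟨rfl, rfl⟩)), hbc⟩)
  have nHac : ¬ (switchedGraph G a b c d).Adj a c := by
    intro hadj
    rw [switchedGraph_adj] at hadj
    rcases hadj with ⟨-, hh, -⟩ | ⟨hh, -⟩
    · exact hh ⟨rfl, rfl⟩
    · rcases hh with ⟨-, h'⟩ | ⟨h', -⟩ | ⟨h', -⟩ | ⟨h', -⟩
      · exact hcd h'
      · exact had h'
      · exact hab h'
      · exact hac h'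
  have nHbd : ¬ (switchedGraph G a b c d).Adj b d := by
    intro hadj
    rw [switchedGraph_adj] at hadj
    rcases hadj with ⟨-, -, -, hh, -⟩ | ⟨hh, -⟩
    · exact hh ⟨rfl, rfl⟩
    · rcases hh with ⟨h', -⟩ | ⟨h', -⟩ | ⟨-, h'⟩ | ⟨h', -⟩
      · exact hab h'.symm
      · exact hbd h'
      · exact hcd h'.symm
      · exact hbc h'
  refine ⟨a, b, d, c, ⟨hab, had, hac, hbd, hbc, fun h' => hcd h'.symm,
    Had, Hbc, nHac, nHbd, ?_⟩, by rw [hdeg]; exact hdab, by rw [hdeg]; exact hdcd.symm⟩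
  rw [← SimpleGraph.edgeSet_inj]
  rw [switched_edgeSet hac hbd, switched_edgeSet had hbc]
  exact (set_restore (G.mem_edgeSet.2 Gac) (G.mem_edgeSet.2 Gbd)
    (fun hh => nGad (G.mem_edgeSet.1 hh)) (fun hh => nGbc (G.mem_edgeSet.1 hh))
    (by rw [Ne, Sym2.eq_iff]; rintro (⟨-, h'⟩ | ⟨h', -⟩) <;> [exact hcd h'; exact had h'])
    (by rw [Ne, Sym2.eq_iff]; rintro (⟨h', -⟩ | ⟨h', -⟩) <;> [exact hab h'; exact hac h'])
    (by rw [Ne, Sym2.eq_iff]; rintro (⟨h', -⟩ | ⟨-, h'⟩) <;> [exact hab h'.symm; exact had h'.symm])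
    (by rw [Ne, Sym2.eq_iff]; rintro (⟨-, h'⟩ | ⟨h', -⟩) <;> [exact hcd h'.symm; exact hbc h'])).symm

end NDLwork3

namespace NDLwork4
open NDLwork NDLwork2 NDLwork3

variable {V : Type*} [Fintype V] {G G' : SimpleGraph V}

lemma deg_eq (h : ∀ v, NDL G v = NDL G' v) : deg G = deg G' := by
  funext v
  rw [← card_NDL, ← card_NDL, h v]

lemma cnt_eq (h : ∀ v, NDL G v = NDL G' v) (v : V) (k : ℕ) :
    {u | G.Adj v u ∧ deg G u = k}.ncard = {u | G'.Adj v u ∧ deg G u = k}.ncard := by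
  have hd := deg_eq h
  have h1 : (NDL G v).count k = (NDL G' v).count k := by rw [h v]
  rw [count_NDL, count_NDL] at h1
  have e1 : {u | u ∈ G.neighborSet v ∧ deg G u = k} = {u | G.Adj v u ∧ deg G u = k} := by
    ext u; simp [SimpleGraph.mem_neighborSet]
  have e2 : {u | u ∈ G'.neighborSet v ∧ deg G' u = k} = {u | G'.Adj v u ∧ deg G u = k} := by
    ext u; simp [SimpleGraph.mem_neighborSet, hd]
  rw [e1, e2] at h1
  exact h1

lemma cntD_eq (h : ∀ v, NDL G v = NDL G' v) (v : V) (k : ℕ) :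
    {u | (G.Adj v u ∧ ¬ G'.Adj v u) ∧ deg G u = k}.ncard
      = {u | (G'.Adj v u ∧ ¬ G.Adj v u) ∧ deg G u = k}.ncard := by
  have hsplit1 : {u | G.Adj v u ∧ deg G u = k}
      = {u | (G.Adj v u ∧ ¬ G'.Adj v u) ∧ deg G u = k}
        ∪ {u | (G.Adj v u ∧ G'.Adj v u) ∧ deg G u = k} := by
    ext u; simp only [Set.mem_setOf_eq, Set.mem_union]; tauto
  have hsplit2 : {u | G'.Adj v u ∧ deg G u = k}
      = {u | (G'.Adj v u ∧ ¬ G.Adj v u) ∧ deg G u = k}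
        ∪ {u | (G.Adj v u ∧ G'.Adj v u) ∧ deg G u = k} := by
    ext u; simp only [Set.mem_setOf_eq, Set.mem_union]; tauto
  have hdisj1 : Disjoint {u | (G.Adj v u ∧ ¬ G'.Adj v u) ∧ deg G u = k}
      {u | (G.Adj v u ∧ G'.Adj v u) ∧ deg G u = k} := by
    rw [Set.disjoint_left]; rintro u ⟨⟨-, hn⟩, -⟩ ⟨⟨-, hy⟩, -⟩; exact hn hy
  have hdisj2 : Disjoint {u | (G'.Adj v u ∧ ¬ G.Adj v u) ∧ deg G u = k}
      {u | (G.Adj v u ∧ G'.Adj v u) ∧ deg G u = k} := by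
    rw [Set.disjoint_left]; rintro u ⟨⟨-, hn⟩, -⟩ ⟨⟨hy, -⟩, -⟩; exact hn hy
  have e1 := cnt_eq h v k
  rw [hsplit1, hsplit2, Set.ncard_union_eq hdisj1 (Set.toFinite _) (Set.toFinite _),
    Set.ncard_union_eq hdisj2 (Set.toFinite _) (Set.toFinite _)] at e1
  omega

lemma transferD (h : ∀ v, NDL G v = NDL G' v) (v : V) (k : ℕ)
    (hex : ∃ u, (G.Adj v u ∧ ¬ G'.Adj v u) ∧ deg G u = k) :
    ∃ u, (G'.Adj v u ∧ ¬ G.Adj v u) ∧ deg G u = k := by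
  have hc := cntD_eq h v k
  have hpos : 0 < {u | (G.Adj v u ∧ ¬ G'.Adj v u) ∧ deg G u = k}.ncard := by
    rw [Set.ncard_pos (Set.toFinite _)]
    exact hex
  rw [hc] at hpos
  exact (Set.ncard_pos (Set.toFinite _)).1 hpos

lemma transferD' (h : ∀ v, NDL G v = NDL G' v) (v : V) (k : ℕ)
    (hex : ∃ u, (G'.Adj v u ∧ ¬ G.Adj v u) ∧ deg G u = k) :
    ∃ u, (G.Adj v u ∧ ¬ G'.Adj v u) ∧ deg G u = k := by
  have hc := cntD_eq h v k
  have hpos : 0 < {u | (G'.Adj v u ∧ ¬ G.Adj v u) ∧ deg G u = k}.ncard := by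
    rw [Set.ncard_pos (Set.toFinite _)]
    exact hex
  rw [← hc] at hpos
  exact (Set.ncard_pos (Set.toFinite _)).1 hpos

end NDLwork4

namespace NDLwork5
open scoped symmDiff

lemma ncard_lt_helper {α : Type*} [Finite α] {A B : Set α} {e f1 f2 f3 : α}
    (hsub : B ⊆ insert e (A \ {f1, f2, f3}))
    (h1 : f1 ∈ A) (h2 : f2 ∈ A) (h3 : f3 ∈ A)
    (d12 : f1 ≠ f2) (d13 : f1 ≠ f3) (d23 : f2 ≠ f3) : B.ncard < A.ncard := by
  have hF : ({f1, f2, f3} : Set α).ncard = 3 := by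
    rw [Set.ncard_insert_of_notMem (by simp [d12, d13]) (Set.toFinite _),
      Set.ncard_insert_of_notMem (by simp [d23]) (Set.toFinite _), Set.ncard_singleton]
  have hFsub : ({f1, f2, f3} : Set α) ⊆ A := by
    rintro x (rfl | rfl | rfl) <;> assumption
  have h3le : 3 ≤ A.ncard := hF ▸ Set.ncard_le_ncard hFsub (Set.toFinite _)
  have hdiff : (A \ {f1, f2, f3}).ncard = A.ncard - 3 := by
    rw [Set.ncard_diff hFsub (Set.toFinite _), hF]
  calc B.ncard ≤ (insert e (A \ {f1, f2, f3})).ncard :=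
        Set.ncard_le_ncard hsub (Set.toFinite _)
    _ ≤ (A \ {f1, f2, f3}).ncard + 1 := Set.ncard_insert_le _ _
    _ < A.ncard := by omega

lemma key1 {α : Type*} {E E' : Set α} {p q r s : α}
    (hpE' : p ∉ E') (hqE' : q ∉ E') (hrE' : r ∈ E')
    (hps : p ≠ s) (hpr : p ≠ r) (hqs : q ≠ s) (hqr : q ≠ r) :
    (((E \ {p, q}) ∪ {s, r}) ∆ E') ⊆ insert s ((E ∆ E') \ {p, q, r}) := by
  intro e he
  rw [Set.mem_symmDiff] at he
  by_cases hes : e = s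
  · exact Or.inl hes
  right
  by_cases hep : e = p
  · subst hep
    exfalso
    rcases he with ⟨hmem, -⟩ | ⟨hmem, -⟩
    · rcases hmem with ⟨-, hn⟩ | (h' | h')
      · exact hn (Or.inl rfl)
      · exact hps h'
      · exact hpr h'
    · exact hpE' hmem
  by_cases heq : e = q
  · subst heq
    exfalso
    rcases he with ⟨hmem, -⟩ | ⟨hmem, -⟩
    · rcases hmem with ⟨-, hn⟩ | (h' | h')
      · exact hn (Or.inr rfl)
      · exact hqs h'
      · exact hqr h'
    · exact hqE' hmem
  by_cases her : e = r
  · subst her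
    exfalso
    rcases he with ⟨-, hn⟩ | ⟨-, hn⟩
    · exact hn hrE'
    · exact hn (by simp)
  refine ⟨?_, by rintro (h' | h' | h') <;> tauto⟩
  rw [Set.mem_symmDiff]
  rcases he with ⟨hmem, hn⟩ | ⟨hmem, hn⟩
  · rcases hmem with ⟨hE, -⟩ | (h' | h')
    · exact Or.inl ⟨hE, hn⟩
    · exact absurd h' hes
    · exact absurd h' her
  · refine Or.inr ⟨hmem, fun hE => hn ?_⟩
    exact Or.inl ⟨hE, by rintro (rfl | rfl) <;> tauto⟩

lemma key2 {α : Type*} {E E' : Set α} {p q r s : α}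
    (hpE : p ∈ E) (hqE : q ∈ E) (hrE : r ∉ E)
    (hrp : r ≠ p) (hrq : r ≠ q) (hsp : s ≠ p) (hsq : s ≠ q) :
    (E ∆ ((E' \ {r, s}) ∪ {q, p})) ⊆ insert s ((E ∆ E') \ {p, q, r}) := by
  intro e he
  rw [Set.mem_symmDiff] at he
  by_cases hes : e = s
  · exact Or.inl hes
  right
  by_cases hep : e = p
  · subst hep
    exfalso
    rcases he with ⟨-, hn⟩ | ⟨-, hn⟩
    · exact hn (by simp)
    · exact hn hpE
  by_cases heq : e = q
  · subst heq
    exfalso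
    rcases he with ⟨-, hn⟩ | ⟨-, hn⟩
    · exact hn (by simp)
    · exact hn hqE
  by_cases her : e = r
  · subst her
    exfalso
    rcases he with ⟨hmem, -⟩ | ⟨hmem, -⟩
    · exact hrE hmem
    · rcases hmem with ⟨-, hn⟩ | (h' | h')
      · exact hn (Or.inl rfl)
      · exact hrq h'
      · exact hrp h'
  refine ⟨?_, by rintro (h' | h' | h') <;> tauto⟩
  rw [Set.mem_symmDiff]
  rcases he with ⟨hmem, hn⟩ | ⟨hmem, hn⟩
  · refine Or.inl ⟨hmem, fun hE' => hn ?_⟩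
    exact Or.inl ⟨hE', by rintro (rfl | rfl) <;> tauto⟩
  · rcases hmem with ⟨hE', -⟩ | (h' | h')
    · exact Or.inr ⟨hE', hn⟩
    · exact absurd h' heq
    · exact absurd h' hep

end NDLwork5

namespace NDLwork6
open NDLwork NDLwork2 NDLwork3 NDLwork4 NDLwork5
open scoped symmDiff

variable {V : Type*}

def Dadj (G G' : SimpleGraph V) (u w : V) : Prop := G.Adj u w ∧ ¬ G'.Adj u w

def GoodPair (G G' : SimpleGraph V) (j k : ℕ) (p : V × V) : Prop :=
  Dadj G G' p.1 p.2 ∧ deg G p.1 = j ∧ deg G p.2 = k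

def Chain (G G' : SimpleGraph V) (j k n : ℕ) : Prop :=
  ∃ f : ℕ → V × V, (∀ i, GoodPair G G' j k (f i)) ∧
    (∀ i, Dadj G' G (f i).2 (f (i+1)).1) ∧ ∀ i, f (i + n) = f i

lemma Dadj.symm' {G G' : SimpleGraph V} {u w : V} (h : Dadj G G' u w) : Dadj G G' w u :=
  ⟨h.1.symm, fun hh => h.2 hh.symm⟩

lemma sym2_ne_of_ne {x y z w : V} (h1 : x ≠ z ∨ y ≠ w) (h2 : x ≠ w ∨ y ≠ z) :
    s(x,y) ≠ s(z,w) := by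
  rw [Ne, Sym2.eq_iff]
  rintro (⟨ha, hb⟩ | ⟨ha, hb⟩)
  · rcases h1 with h' | h' <;> tauto
  · rcases h2 with h' | h' <;> tauto

lemma mod_succ {L i : ℕ} (hL : 0 < L) : (i + 1) % L = (i % L + 1) % L := by
  conv_lhs => rw [Nat.add_mod]
  rcases Nat.eq_or_lt_of_le hL with h1 | h1
  · simp [← h1, Nat.mod_one]
  · rw [Nat.mod_eq_of_lt h1]

variable [Fintype V] {G G' : SimpleGraph V}

lemma exists_next (h : ∀ v, NDL G v = NDL G' v) {j k : ℕ} {p : V × V}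
    (hp : GoodPair G G' j k p) :
    ∃ q : V × V, GoodPair G G' j k q ∧ Dadj G' G p.2 q.1 := by
  obtain ⟨hD, hdx, hdy⟩ := hp
  obtain ⟨u, hu, hud⟩ := transferD h p.2 j ⟨p.1, ⟨hD.1.symm, fun hh => hD.2 hh.symm⟩, hdx⟩
  obtain ⟨w, hw, hwd⟩ := transferD' h u k ⟨p.2, ⟨hu.1.symm, fun hh => hu.2 hh.symm⟩, hdy⟩
  exact ⟨(u, w), ⟨hw, hud, hwd⟩, hu⟩

noncomputable def walk (h : ∀ v, NDL G v = NDL G' v) (j k : ℕ)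
    (p0 : {p : V × V // GoodPair G G' j k p}) :
    ℕ → {p : V × V // GoodPair G G' j k p}
  | 0 => p0
  | (n+1) =>
    let prev := walk h j k p0 n
    ⟨(exists_next h prev.2).choose, (exists_next h prev.2).choose_spec.1⟩

lemma walk_link (h : ∀ v, NDL G v = NDL G' v) (j k : ℕ)
    (p0 : {p : V × V // GoodPair G G' j k p}) (n : ℕ) :
    Dadj G' G (walk h j k p0 n).1.2 (walk h j k p0 (n+1)).1.1 := by
  have : walk h j k p0 (n+1)
      = ⟨(exists_next h (walk h j k p0 n).2).choose,
         (exists_next h (walk h j k p0 n).2).choose_spec.1⟩ := by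
    rw [walk]
  rw [this]
  exact (exists_next h (walk h j k p0 n).2).choose_spec.2

lemma chain_exists (h : ∀ v, NDL G v = NDL G' v) {j k : ℕ}
    {p : V × V} (hp : GoodPair G G' j k p) :
    ∃ n, 0 < n ∧ Chain G G' j k n := by
  classical
  obtain ⟨m, n, hmn, heq⟩ : ∃ m n, m < n ∧ (walk h j k ⟨p, hp⟩ m).1 = (walk h j k ⟨p, hp⟩ n).1 := by
    obtain ⟨x, y, hne, he⟩ := Finite.exists_ne_map_eq_of_infinite
      (fun i => (walk h j k ⟨p, hp⟩ i).1)
    rcases Nat.lt_or_ge x y with h' | h'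
    · exact ⟨x, y, h', he⟩
    · exact ⟨y, x, lt_of_le_of_ne h' (Ne.symm hne), he.symm⟩
  set L := n - m with hLdef
  have hL : 0 < L := by omega
  refine ⟨L, hL, fun t => (walk h j k ⟨p, hp⟩ (m + t % L)).1, fun i => (walk h j k ⟨p, hp⟩ _).2,
    ?_, ?_⟩
  · intro i
    show Dadj G' G (walk h j k ⟨p, hp⟩ (m + i % L)).1.2
      (walk h j k ⟨p, hp⟩ (m + (i+1) % L)).1.1
    have hiL : i % L < L := Nat.mod_lt _ hL
    by_cases hcase : i % L + 1 < L
    · have h1 : (i+1) % L = i % L + 1 := by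
        rw [mod_succ hL, Nat.mod_eq_of_lt hcase]
      rw [h1, show m + (i % L + 1) = (m + i % L) + 1 by omega]
      exact walk_link h j k ⟨p, hp⟩ (m + i % L)
    · have h2 : i % L + 1 = L := by omega
      have h1 : (i+1) % L = 0 := by
        rw [mod_succ hL, h2, Nat.mod_self]
      rw [h1, Nat.add_zero]
      have h3 := walk_link h j k ⟨p, hp⟩ (m + i % L)
      have h4 : m + i % L + 1 = n := by omega
      rw [h4] at h3
      rwa [heq]
  · intro i
    show (walk h j k ⟨p, hp⟩ (m + (i + L) % L)).1 = (walk h j k ⟨p, hp⟩ (m + i % L)).1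
    rw [Nat.add_mod_right]

lemma chain_one_false {j k : ℕ} : ¬ Chain G G' j k 1 := by
  rintro ⟨f, hGP, hlink, hper⟩
  have h1 := hlink 0
  rw [show (0:ℕ) + 1 = 0 + 1 from rfl, hper 0] at h1
  exact h1.2 ((hGP 0).1.1.symm)

end NDLwork6

namespace NDLwork7
open NDLwork NDLwork2 NDLwork3 NDLwork4 NDLwork5 NDLwork6
open scoped symmDiff

variable {V : Type*} [Fintype V]

set_option maxHeartbeats 1000000 in
lemma step_aux {G G' : SimpleGraph V} (h : ∀ v, NDL G v = NDL G' v)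
    {x0 y0 : V} (hGxy : G.Adj x0 y0) (hG'xy : ¬ G'.Adj x0 y0) :
    (∃ H, NSwitch G H ∧ (H.edgeSet ∆ G'.edgeSet).ncard < (G.edgeSet ∆ G'.edgeSet).ncard) ∨
    (∃ H, NSwitch G' H ∧ (G.edgeSet ∆ H.edgeSet).ncard < (G.edgeSet ∆ G'.edgeSet).ncard) := by
  classical
  set j := deg G x0 with hj
  set k := deg G y0 with hk
  have hp0 : GoodPair G G' j k (x0, y0) := ⟨⟨hGxy, hG'xy⟩, rfl, rfl⟩
  have hex : ∃ t, Chain G G' j k (t + 2) := by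
    obtain ⟨n, hnpos, hch⟩ := chain_exists h hp0
    match n, hnpos with
    | 1, _ => exact absurd hch chain_one_false
    | (t+2), _ => exact ⟨t, hch⟩
  have hchN : Chain G G' j k (Nat.find hex + 2) := Nat.find_spec hex
  set N := Nat.find hex + 2 with hNdef
  have hminN : ∀ M, 0 < M → M < N → ¬ Chain G G' j k M := by
    intro M hM hlt hcM
    match M, hM with
    | 1, _ => exact chain_one_false hcM
    | (M+2), _ => exact Nat.find_min hex (by omega) hcM
  obtain ⟨f, hGP, hlink, hper⟩ := hchN
  have hN2 : 2 ≤ N := by omega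
  by_cases hB : ∀ i, (f (i+1)).2 = (f i).1
  · exfalso
    have haD : ∀ i, Dadj G G' (f (i+1)).1 (f i).1 := fun i => by
      have h1 := (hGP (i+1)).1
      rwa [hB i] at h1
    have haD' : ∀ i, Dadj G' G (f i).1 (f (i+2)).1 := fun i => by
      have h1 := hlink (i+1)
      rwa [hB i] at h1
    match hT : Nat.find hex with
    | 0 =>
      -- N = 2
      have hN : N = 2 := by omega
      have h1 := haD' 0
      rw [show (0:ℕ) + 2 = 0 + N by omega, hper 0] at h1
      exact h1.1.ne rfl
    | 1 =>
      -- N = 3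
      have hN : N = 3 := by omega
      have h1 := haD' 0
      have h2 := haD 2
      rw [show (2:ℕ) + 1 = 0 + N by omega, hper 0] at h2
      rw [Nat.zero_add] at h1
      exact h1.2 h2.1
    | (t+2) =>
      -- N ≥ 4
      have hN4 : 4 ≤ N := by omega
      have hjk : j = k := by
        have h1 := (hGP 0).2.1
        have h2 := (hGP 1).2.2
        rw [show (1:ℕ) = 0 + 1 from rfl, hB 0] at h2
        omega
      have hdega : ∀ i, deg G (f i).1 = j := fun i => (hGP i).2.1
      apply hminN 2 (by omega) (by omega)
      refine ⟨fun i => if i % 2 = 0 then ((f 0).1, (f 1).1) else ((f 3).1, (f 2).1),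
        ?_, ?_, ?_⟩
      · intro i
        by_cases hi : i % 2 = 0
        · simp only [hi, if_pos]
          exact ⟨(haD 0).symm', hdega 0, by rw [hdega 1, hjk]⟩
        · simp only [hi, if_neg, ite_false]
          exact ⟨haD 2, hdega 3, by rw [hdega 2, hjk]⟩
      · intro i
        by_cases hi : i % 2 = 0
        · have hi1 : (i+1) % 2 = 1 := by omega
          simp only [hi, hi1, if_pos, if_neg, ite_true, ite_false, one_ne_zero]
          exact haD' 1
        · have hi1 : (i+1) % 2 = 0 := by omega
          simp only [hi, hi1, if_pos, if_neg, ite_true, ite_false]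
          exact (haD' 0).symm'
      · intro i
        have : (i + 2) % 2 = i % 2 := by omega
        simp only [this]
  · push_neg at hB
    obtain ⟨i0, hi0⟩ := hB
    obtain ⟨g, hGPg, hlinkg, hperg, hne⟩ :
        ∃ g : ℕ → V × V, (∀ i, GoodPair G G' j k (g i)) ∧
          (∀ i, Dadj G' G (g i).2 (g (i+1)).1) ∧ (∀ i, g (i + N) = g i) ∧
          (g 1).2 ≠ (g 0).1 := by
      refine ⟨fun t => f (i0 + t), fun i => hGP _, fun i => ?_, fun i => ?_, ?_⟩
      · have h1 := hlink (i0 + i)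
        rwa [show i0 + i + 1 = i0 + (i + 1) by omega] at h1
      · show f (i0 + (i + N)) = f (i0 + i)
        rw [show i0 + (i + N) = (i0 + i) + N by omega, hper]
      · show (f (i0 + 1)).2 ≠ (f (i0 + 0)).1
        rw [Nat.add_zero]
        exact hi0
    set v0 := (g 0).1 with hv0
    set v1 := (g 0).2 with hv1
    set v2 := (g 1).1 with hv2
    set v3 := (g 1).2 with hv3
    have hD01 : Dadj G G' v0 v1 := (hGPg 0).1
    have hD12 : Dadj G' G v1 v2 := hlinkg 0
    have hD23 : Dadj G G' v2 v3 := (hGPg 1).1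
    have hdv0 : deg G v0 = j := (hGPg 0).2.1
    have hdv1 : deg G v1 = k := (hGPg 0).2.2
    have hdv2 : deg G v2 = j := (hGPg 1).2.1
    have hdv3 : deg G v3 = k := (hGPg 1).2.2
    by_cases hD03 : Dadj G G' v0 v3
    · -- build a shorter chain, contradiction
      exfalso
      have hLpos : 0 < N - 1 := by omega
      apply hminN (N-1) hLpos (by omega)
      refine ⟨fun t => if t % (N-1) = 0 then (v0, v3) else g (1 + t % (N-1)), ?_, ?_, ?_⟩
      · intro i
        by_cases hi : i % (N-1) = 0
        · simp only [hi, if_pos, ite_true]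
          exact ⟨hD03, hdv0, hdv3⟩
        · simp only [hi, if_neg, ite_false]
          exact hGPg _
      · intro i
        have hiL : i % (N-1) < N - 1 := Nat.mod_lt _ hLpos
        by_cases hi : i % (N-1) = 0
        · by_cases hL1 : N - 1 = 1
          · have h1 : (i+1) % (N-1) = 0 := by
              rw [hL1, Nat.mod_one]
            simp only [hi, h1, if_pos, ite_true]
            show Dadj G' G v3 v0
            have h2 := hlinkg 1
            rw [show (1:ℕ) + 1 = 0 + N by omega, hperg 0] at h2
            exact h2
          · have h1 : (i+1) % (N-1) = 1 := by
              rw [mod_succ hLpos, hi]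
              exact Nat.mod_eq_of_lt (by omega)
            simp only [hi, h1, if_pos, if_neg, ite_true, ite_false, one_ne_zero]
            show Dadj G' G v3 (g (1 + 1)).1
            exact hlinkg 1
        · by_cases hcase : i % (N-1) + 1 < N - 1
          · have h1 : (i+1) % (N-1) = i % (N-1) + 1 := by
              rw [mod_succ hLpos, Nat.mod_eq_of_lt hcase]
            have h2 : (i+1) % (N-1) ≠ 0 := by omega
            simp only [hi, h1, h2, if_neg, ite_false]
            have h3 := hlinkg (1 + i % (N-1))
            rwa [show 1 + i % (N-1) + 1 = 1 + (i % (N-1) + 1) by omega] at h3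
          · have heqL : i % (N-1) + 1 = N - 1 := by omega
            have h1 : (i+1) % (N-1) = 0 := by
              rw [mod_succ hLpos, heqL, Nat.mod_self]
            simp only [hi, h1, if_pos, if_neg, ite_true, ite_false]
            show Dadj G' G (g (1 + i % (N-1))).2 v0
            have h3 := hlinkg (1 + i % (N-1))
            rw [show 1 + i % (N-1) + 1 = 0 + N by omega, hperg 0] at h3
            exact h3
      · intro i
        have : (i + (N-1)) % (N-1) = i % (N-1) := Nat.add_mod_right _ _
        simp only [this]
    · -- found the switch configuration
      have h01 : v0 ≠ v1 := hD01.1.ne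
      have h12 : v1 ≠ v2 := hD12.1.ne
      have h23 : v2 ≠ v3 := hD23.1.ne
      have h02 : v0 ≠ v2 := by
        intro hc
        exact hD12.2 (hc ▸ hD01.1.symm)
      have h13 : v1 ≠ v3 := by
        intro hc
        exact hD12.2 (hc ▸ hD23.1).symm
      have h03 : v0 ≠ v3 := Ne.symm hne
      have nG21 : ¬ G.Adj v2 v1 := fun hc => hD12.2 hc.symm
      by_cases hG03 : G.Adj v0 v3
      · -- switch on G'
        have hG'03 : G'.Adj v0 v3 := by
          by_contra hc
          exact hD03 ⟨hG03, hc⟩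
        right
        refine ⟨switchedGraph G' v2 v0 v1 v3, ⟨v2, v0, v1, v3,
          ⟨h02.symm, h12.symm, h23, h01, h03, h13,
            hD12.1.symm, hG'03, hD23.2, hD01.2, rfl⟩,
          by rw [← deg_eq h]; rw [hdv2, hdv0], by rw [← deg_eq h]; rw [hdv1, hdv3]⟩, ?_⟩
        rw [switched_edgeSet h23 h01]
        apply ncard_lt_helper
          (key2 (G.mem_edgeSet.2 hD01.1) (G.mem_edgeSet.2 hD23.1)
            (fun hc => nG21 (G.mem_edgeSet.1 hc))
            (sym2_ne_of_ne (Or.inl h02.symm) (Or.inl h12.symm))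
            (sym2_ne_of_ne (Or.inr h13) (Or.inl h23))
            (sym2_ne_of_ne (Or.inr h13.symm) (Or.inl h01))
            (sym2_ne_of_ne (Or.inl h02) (Or.inl h03))
          )
          (Set.mem_symmDiff.2 (Or.inl ⟨G.mem_edgeSet.2 hD01.1, fun hc => hD01.2 (G'.mem_edgeSet.1 hc)⟩))
          (Set.mem_symmDiff.2 (Or.inl ⟨G.mem_edgeSet.2 hD23.1, fun hc => hD23.2 (G'.mem_edgeSet.1 hc)⟩))
          (Set.mem_symmDiff.2 (Or.inr ⟨G'.mem_edgeSet.2 hD12.1.symm, fun hc => nG21 (G.mem_edgeSet.1 hc)⟩))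
          (sym2_ne_of_ne (Or.inl h02) (Or.inl h03))
          (sym2_ne_of_ne (Or.inl h02) (Or.inl h01))
          (sym2_ne_of_ne (Or.inr h13.symm) (Or.inl h12.symm))
      · -- switch on G
        left
        refine ⟨switchedGraph G v0 v2 v1 v3, ⟨v0, v2, v1, v3,
          ⟨h02, h01, h03, h12.symm, h23, h13,
            hD01.1, hD23.1, hG03, nG21, rfl⟩,
          by rw [hdv0, hdv2], by rw [hdv1, hdv3]⟩, ?_⟩
        rw [switched_edgeSet h03 h12.symm]
        apply ncard_lt_helper
          (key1 (fun hc => hD01.2 (G'.mem_edgeSet.1 hc))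
            (fun hc => hD23.2 (G'.mem_edgeSet.1 hc))
            (G'.mem_edgeSet.2 hD12.1.symm)
            (sym2_ne_of_ne (Or.inr h13) (Or.inl h03))
            (sym2_ne_of_ne (Or.inl h02) (Or.inl h01))
            (sym2_ne_of_ne (Or.inl h02.symm) (Or.inl h23))
            (sym2_ne_of_ne (Or.inr h13.symm) (Or.inl h12.symm))
          )
          (Set.mem_symmDiff.2 (Or.inl ⟨G.mem_edgeSet.2 hD01.1, fun hc => hD01.2 (G'.mem_edgeSet.1 hc)⟩))
          (Set.mem_symmDiff.2 (Or.inl ⟨G.mem_edgeSet.2 hD23.1, fun hc => hD23.2 (G'.mem_edgeSet.1 hc)⟩))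
          (Set.mem_symmDiff.2 (Or.inr ⟨G'.mem_edgeSet.2 hD12.1.symm, fun hc => nG21 (G.mem_edgeSet.1 hc)⟩))
          (sym2_ne_of_ne (Or.inl h02) (Or.inl h03))
          (sym2_ne_of_ne (Or.inl h02) (Or.inl h01))
          (sym2_ne_of_ne (Or.inr h13.symm) (Or.inl h12.symm))

end NDLwork7

namespace NDLwork8
open NDLwork NDLwork2 NDLwork3 NDLwork4 NDLwork5 NDLwork6 NDLwork7
open scoped symmDiff

variable {V : Type*} [Fintype V]

lemma step {G G' : SimpleGraph V} (h : ∀ v, NDL G v = NDL G' v) (hne : G ≠ G') :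
    (∃ H, NSwitch G H ∧ (H.edgeSet ∆ G'.edgeSet).ncard < (G.edgeSet ∆ G'.edgeSet).ncard) ∨
    (∃ H, NSwitch G' H ∧ (G.edgeSet ∆ H.edgeSet).ncard < (G.edgeSet ∆ G'.edgeSet).ncard) := by
  have hdiff : ∃ u w, (G.Adj u w ∧ ¬ G'.Adj u w) ∨ (G'.Adj u w ∧ ¬ G.Adj u w) := by
    by_contra hc
    push_neg at hc
    apply hne
    ext u w
    exact ⟨(hc u w).1, (hc u w).2⟩
  obtain ⟨u, w, hcase⟩ := hdiff
  rcases hcase with ⟨h1, h2⟩ | ⟨h1, h2⟩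
  · exact step_aux h h1 h2
  · have h' : ∀ v, NDL G' v = NDL G v := fun v => (h v).symm
    rcases step_aux h' h1 h2 with ⟨H, hsw, hlt⟩ | ⟨H, hsw, hlt⟩
    · refine Or.inr ⟨H, hsw, ?_⟩
      rw [symmDiff_comm G.edgeSet H.edgeSet, symmDiff_comm G.edgeSet G'.edgeSet]
      exact hlt
    · refine Or.inl ⟨H, hsw, ?_⟩
      rw [symmDiff_comm H.edgeSet G'.edgeSet, symmDiff_comm G.edgeSet G'.edgeSet]
      exact hlt

theorem main (G G' : SimpleGraph V) (h : ∀ v, NDL G v = NDL G' v) :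
    Relation.ReflTransGen NSwitch G G' := by
  classical
  suffices hsuf : ∀ n (G G' : SimpleGraph V), (∀ v, NDL G v = NDL G' v) →
      (G.edgeSet ∆ G'.edgeSet).ncard = n → Relation.ReflTransGen NSwitch G G' by
    exact hsuf _ G G' h rfl
  intro n
  induction n using Nat.strong_induction_on with
  | _ n ih =>
    intro G G' hNDL hcard
    by_cases hGG : G = G'
    · subst hGG
      exact Relation.ReflTransGen.refl
    · rcases step hNDL hGG with ⟨H, hsw, hlt⟩ | ⟨H, hsw, hlt⟩
      · have hNDL' : ∀ v, NDL H v = NDL G' v := fun v => (NSwitch_NDL hsw v).trans (hNDL v)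
        have hrec := ih _ (hcard ▸ hlt) H G' hNDL' rfl
        exact Relation.ReflTransGen.head hsw hrec
      · have hNDL' : ∀ v, NDL G v = NDL H v := fun v => (hNDL v).trans (NSwitch_NDL hsw v).symm
        have hrec := ih _ (hcard ▸ hlt) G H hNDL' rfl
        exact hrec.tail (NSwitch_symm hsw)

end NDLwork8

/-- If `G` and `G'` are realizations of the same neighborhood degree list, then a
finite sequence of N-switches transforms `G` into `G'`. -/
theorem stmt7 {V : Type*} [Fintype V] (G G' : SimpleGraph V)
    (h : ∀ v, NDL G v = NDL G' v) :
    Relation.ReflTransGen NSwitch G G' := by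
  exact NDLwork8.main G G' h
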